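/- Define T_n(x) = Σ_{k≥0} T(n,k) x^k ∈ ℚ[x] for n ≥ 1, and T_0(x) = 1, where T(n,k) is the number of permutations of [n] with exactly k exterior peaks. Then in the formal power series ring (ℚ[x])[[t]], (Σ_{n≥0} T_n(x) tⁿ/n!) · (Σ_{m≥0} (1-x)^m t^{2m}/(2m)! − Σ_{m≥0} (1-x)^m t^{2m+1}/(2m+1)!) = 1. (This is Gessel's formula Σ_{n≥0} T_n(x) tⁿ/n! = √(1-x)/(√(1-x)·cosh(√(1-x)t) − sinh(√(1-x)t)) with the denominator cleared and the common factor √(1-x) cancelled.) -/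

import Mathlib

/-- The number of exterior peaks of a word given as a list: indices `i` (1-based) with
`1 < i < n` and `l_{i-1} < l_i > l_{i+1}`, or `i = 1` and `l_1 > l_2`. -/
def extPeaksList {α : Type*} [LinearOrder α] (l : List α) : ℕ :=
  ((l.zip (l.tail.zip l.tail.tail)).countP
      fun p => decide (p.1 < p.2.1 ∧ p.2.2 < p.2.1)) +
    (match l with
     | a :: b :: _ => if b < a then 1 else 0
     | _ => 0)

/-- The number of exterior peaks of a permutation of `[n]`. -/
def extPeaks {n : ℕ} (π : Equiv.Perm (Fin n)) : ℕ :=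
  extPeaksList (List.ofFn fun i => (π i : ℕ))

/-- `extPeakCount n k` is the number of permutations of `[n]` with exactly `k` exterior peaks. -/
noncomputable def extPeakCount (n k : ℕ) : ℕ :=
  Nat.card {π : Equiv.Perm (Fin n) // extPeaks π = k}

/-- `T_n(x) = ∑_{k≥0} T(n,k) xᵏ` for `n ≥ 1` and `T_0(x) = 1`.  (All terms with `k > n`
vanish, so the sum over `k ∈ range (n+1)` captures the full sum over `k ≥ 0`.) -/
noncomputable def Tpoly : ℕ → Polynomial ℚ
  | 0 => 1
  | (n + 1) => ∑ k ∈ Finset.range (n + 2),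
      (extPeakCount (n + 1) k : Polynomial ℚ) * Polynomial.X ^ k

namespace GA

def Ic (l : List ℕ) : ℕ :=
  (l.zip (l.tail.zip l.tail.tail)).countP
      fun p => decide (p.1 < p.2.1 ∧ p.2.2 < p.2.1)

def hP (l : List ℕ) : Prop := 1 < l.length ∧ l.getD 1 0 < l.getD 0 0

def tP (a : ℕ) (l : List ℕ) : Prop :=
  1 < l.length ∧ a < l.getD 0 0 ∧ l.getD 1 0 < l.getD 0 0

def ePk (l : List ℕ) (j : ℕ) : Prop :=
  j + 1 < l.length ∧ l.getD (j+1) 0 < l.getD j 0 ∧ (j = 0 ∨ l.getD (j-1) 0 < l.getD j 0)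

def iPk (l : List ℕ) (j : ℕ) : Prop :=
  0 < j ∧ j + 1 < l.length ∧ l.getD (j+1) 0 < l.getD j 0 ∧ l.getD (j-1) 0 < l.getD j 0

def Good (l : List ℕ) (p : ℕ) : Prop :=
  p = l.length ∨ ePk l p ∨ (0 < p ∧ ePk l (p-1))

instance (l : List ℕ) : Decidable (hP l) := by unfold hP; infer_instance
instance (a : ℕ) (l : List ℕ) : Decidable (tP a l) := by unfold tP; infer_instance
instance (l : List ℕ) (j : ℕ) : Decidable (ePk l j) := by unfold ePk; infer_instance
instance (l : List ℕ) (j : ℕ) : Decidable (iPk l j) := by unfold iPk; infer_instance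
instance (l : List ℕ) (p : ℕ) : Decidable (Good l p) := by unfold Good; infer_instance

lemma extPeaksList_decomp (l : List ℕ) :
    extPeaksList l = Ic l + (if hP l then 1 else 0) := by
  match l with
  | [] => simp [extPeaksList, Ic, hP]
  | [a] => simp [extPeaksList, Ic, hP]
  | a :: b :: t => simp [extPeaksList, Ic, hP]

lemma Ic_nil : Ic [] = 0 := rfl
lemma Ic_single (a : ℕ) : Ic [a] = 0 := rfl
lemma Ic_pair (a b : ℕ) : Ic [a, b] = 0 := rfl

lemma Ic_cons3 (a b c : ℕ) (t : List ℕ) :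
    Ic (a :: b :: c :: t) = Ic (b :: c :: t) + (if a < b ∧ c < b then 1 else 0) := by
  simp [Ic, List.countP_cons]

lemma Ic_cons (a : ℕ) (l : List ℕ) :
    Ic (a :: l) = Ic l + (if tP a l then 1 else 0) := by
  match l with
  | [] => simp [Ic_nil, Ic_single, tP]
  | [b] => simp [Ic, tP]
  | b :: c :: t => rw [Ic_cons3]; simp [tP]

end GA

namespace GA2
open GA

lemma iPk_cons_succ (a : ℕ) (l : List ℕ) (j : ℕ) :
    iPk (a :: l) (j+1) ↔ (iPk l j ∨ (j = 0 ∧ tP a l)) := by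
  cases j with
  | zero => simp [iPk, tP]; try omega
  | succ j' => simp [iPk, tP]; try omega

end GA2

namespace GA3
open GA GA2

lemma sumI (l : List ℕ) :
    Ic l = ∑ j ∈ Finset.range l.length, (if iPk l j then 1 else 0) := by
  induction l with
  | nil => simp [Ic_nil]
  | cons a l ih =>
    rw [Ic_cons, ih]
    rw [List.length_cons, Finset.sum_range_succ']
    have h0 : iPk (a :: l) 0 = False := by simp [iPk]
    have hpt : ∀ j, (if iPk (a :: l) (j+1) then (1:ℕ) else 0)
        = (if iPk l j then 1 else 0) + (if j = 0 ∧ tP a l then 1 else 0) := by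
      intro j
      simp only [iPk_cons_succ]
      rcases j with _ | j'
      · simp [iPk]
      · simp
    simp only [hpt, h0, Finset.sum_add_distrib, if_false]
    have : (∑ j ∈ Finset.range l.length, if j = 0 ∧ tP a l then (1:ℕ) else 0)
        = if tP a l then 1 else 0 := by
      by_cases ht : tP a l
      · have hlen : 0 < l.length := by have := ht.1; omega
        simp only [ht, and_true]
        rw [Finset.sum_ite_eq' (Finset.range l.length) 0 (fun _ => (1:ℕ))]
        simp [Finset.mem_range.2 hlen]
      · simp [ht]
    rw [this]
    omega

lemma ePk_iff (l : List ℕ) (j : ℕ) :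
    ePk l j ↔ (iPk l j ∨ (j = 0 ∧ hP l)) := by
  rcases j with _ | j'
  · simp [ePk, iPk, hP]
  · simp [ePk, iPk, hP]; try omega

lemma sumE (l : List ℕ) :
    extPeaksList l = ∑ j ∈ Finset.range l.length, (if ePk l j then 1 else 0) := by
  rw [extPeaksList_decomp l]
  rw [sumI]
  have hpt : ∀ j, (if ePk l j then (1:ℕ) else 0)
      = (if iPk l j then 1 else 0) + (if j = 0 ∧ hP l then 1 else 0) := by
    intro j
    simp only [ePk_iff]
    rcases j with _ | j'
    · simp [iPk]
    · simp
  simp only [hpt, Finset.sum_add_distrib]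
  congr 1
  by_cases hh : hP l
  · have hlen : 0 < l.length := by have := hh.1; omega
    simp only [hh, and_true]
    rw [Finset.sum_ite_eq' (Finset.range l.length) 0 (fun _ => (1:ℕ))]
    simp [Finset.mem_range.2 hlen]
  · simp [hh]

end GA3

namespace GA4
open GA GA3

lemma ePk_asym (l : List ℕ) (p : ℕ) (hp : 0 < p) (h1 : ePk l p) (h2 : ePk l (p-1)) : False := by
  have ha := h1.2.2.resolve_left (by omega)
  have hb := h2.2.1
  rw [show p - 1 + 1 = p by omega] at hb
  exact absurd ha (not_lt.2 hb.le)

lemma GN (l : List ℕ) :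
    ∑ p ∈ Finset.range (l.length + 1), (if Good l p then (1:ℕ) else 0)
      = 2 * extPeaksList l + 1 := by
  have key : ∀ p, (if Good l p then (1:ℕ) else 0)
      = ((if p = l.length then 1 else 0) + (if ePk l p then 1 else 0))
        + (if 0 < p ∧ ePk l (p-1) then 1 else 0) := by
    intro p
    by_cases h1 : ePk l p
    · have hne : p ≠ l.length := by have := h1.1; omega
      have h3 : ¬(0 < p ∧ ePk l (p-1)) := fun ⟨hp, h2⟩ => ePk_asym l p hp h1 h2
      simp [Good, h1, hne, h3]
    · by_cases h2 : 0 < p ∧ ePk l (p-1)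
      · have hne : p ≠ l.length := by have := h2.2.1; omega
        simp [Good, h1, h2, hne]
      · by_cases h0 : p = l.length
        · subst h0; simp [Good, h1, h2]
        · simp [Good, h1, h2, h0]
  simp only [key, Finset.sum_add_distrib]
  have s1 : (∑ p ∈ Finset.range (l.length+1), if p = l.length then (1:ℕ) else 0) = 1 := by
    rw [Finset.sum_ite_eq' (Finset.range (l.length+1)) l.length (fun _ => (1:ℕ))]
    simp
  have s2 : (∑ p ∈ Finset.range (l.length+1), if ePk l p then (1:ℕ) else 0)
      = extPeaksList l := by
    rw [Finset.sum_range_succ]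
    have : ¬ ePk l l.length := fun h => by have := h.1; omega
    rw [sumE]
    simp [this]
  have s3 : (∑ p ∈ Finset.range (l.length+1), if 0 < p ∧ ePk l (p-1) then (1:ℕ) else 0)
      = extPeaksList l := by
    rw [Finset.sum_range_succ']
    simp only [Nat.lt_irrefl, false_and, if_false, add_zero, Nat.add_sub_cancel,
      Nat.zero_lt_succ, true_and]
    rw [sumE]
  rw [s1, s2, s3]; omega

end GA4

namespace GA5
open GA GA3 GA4 List

lemma getD_insertIdx (M : ℕ) (p : ℕ) (l : List ℕ) (hp : p ≤ l.length) (i : ℕ) :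
    (l.insertIdx p M).getD i 0
      = if i < p then l.getD i 0 else if i = p then M else l.getD (i-1) 0 := by
  rcases lt_trichotomy i p with h | h | h
  · rw [if_pos h]
    have hi : i < l.length := lt_of_lt_of_le h hp
    rw [getD_eq_getElem _ _ (by rw [length_insertIdx_of_le_length hp]; omega),
      getD_eq_getElem _ _ hi]
    exact getElem_insertIdx_of_lt h (by rw [length_insertIdx_of_le_length hp]; omega)
  · subst h
    rw [if_neg (lt_irrefl i), if_pos rfl]
    rw [getD_eq_getElem _ _ (by rw [length_insertIdx_of_le_length hp]; omega)]
    exact getElem_insertIdx_self (by rw [length_insertIdx_of_le_length hp]; omega)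
  · rw [if_neg (by omega), if_neg (by omega)]
    by_cases hi : i - 1 < l.length
    · rw [getD_eq_getElem _ _ (by rw [length_insertIdx_of_le_length hp]; omega),
        getD_eq_getElem _ _ hi]
      have hk : p + (i - 1 - p) = i - 1 := by omega
      have h2 : (l.insertIdx p M)[p + (i-1-p) + 1]'(by rw [length_insertIdx_of_le_length hp]; omega)
          = l[p + (i-1-p)]'(by omega) := getElem_insertIdx_add_succ l M p (i-1-p) (by omega)
      simp only [hk] at h2
      convert h2 using 2
      omega
    · rw [getD_eq_default _ _ (by rw [length_insertIdx_of_le_length hp]; omega),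
        getD_eq_default _ _ (by omega)]

section Main

lemma getD_lt (M : ℕ) (l : List ℕ) (hb : ∀ x ∈ l, x < M) {i : ℕ} (hi : i < l.length) :
    l.getD i 0 < M := by
  rw [getD_eq_getElem _ _ hi]
  exact hb _ (getElem_mem hi)

lemma ePk_w_lt (M p : ℕ) (l : List ℕ) (hp : p ≤ l.length) {j : ℕ} (hj : j + 1 < p) :
    ePk (l.insertIdx p M) j ↔ ePk l j := by
  unfold ePk
  rw [length_insertIdx_of_le_length hp, getD_insertIdx M p l hp, getD_insertIdx M p l hp,
    getD_insertIdx M p l hp]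
  rw [if_pos (by omega : j < p), if_pos hj, if_pos (by omega : j - 1 < p)]
  constructor
  · rintro ⟨h1, h2, h3⟩; exact ⟨by omega, h2, h3⟩
  · rintro ⟨h1, h2, h3⟩; exact ⟨by omega, h2, h3⟩

lemma ePk_w_pm1 (M p : ℕ) (l : List ℕ) (hp : p ≤ l.length) (hb : ∀ x ∈ l, x < M)
    (hp0 : 0 < p) : ¬ ePk (l.insertIdx p M) (p - 1) := by
  rintro ⟨h1, h2, -⟩
  rw [show p - 1 + 1 = p by omega] at h2
  rw [getD_insertIdx M p l hp, getD_insertIdx M p l hp] at h2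
  rw [if_neg (lt_irrefl p), if_pos rfl, if_pos (by omega : p - 1 < p)] at h2
  exact absurd h2 (not_lt.2 (getD_lt M l hb (by omega)).le)

lemma ePk_w_self (M p : ℕ) (l : List ℕ) (hp : p ≤ l.length) (hb : ∀ x ∈ l, x < M) :
    ePk (l.insertIdx p M) p ↔ p < l.length := by
  unfold ePk
  rw [length_insertIdx_of_le_length hp, getD_insertIdx M p l hp, getD_insertIdx M p l hp,
    getD_insertIdx M p l hp]
  rw [if_neg (by omega : ¬ p + 1 < p), if_neg (by omega : ¬ p + 1 = p),
    if_neg (lt_irrefl p), if_pos rfl]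
  constructor
  · rintro ⟨h1, -, -⟩; omega
  · intro h
    refine ⟨by omega, ?_, ?_⟩
    · rw [show p + 1 - 1 = p by omega]
      exact getD_lt M l hb h
    · rcases Nat.eq_zero_or_pos p with h0 | h0
      · exact Or.inl h0
      · rw [if_pos (by omega : p - 1 < p)]
        exact Or.inr (getD_lt M l hb (by omega))

lemma ePk_w_p1 (M p : ℕ) (l : List ℕ) (hp : p ≤ l.length) (hb : ∀ x ∈ l, x < M) :
    ¬ ePk (l.insertIdx p M) (p + 1) := by
  rintro ⟨h1, -, h3⟩
  rw [length_insertIdx_of_le_length hp] at h1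
  rcases h3 with h3 | h3
  · omega
  · rw [getD_insertIdx M p l hp, getD_insertIdx M p l hp] at h3
    rw [if_neg (by omega : ¬ p + 1 - 1 < p), if_pos (by omega : p + 1 - 1 = p),
      if_neg (by omega : ¬ p + 1 < p), if_neg (by omega : ¬ p + 1 = p)] at h3
    exact absurd h3 (not_lt.2 (getD_lt M l hb (by omega)).le)

lemma ePk_w_gt (M p : ℕ) (l : List ℕ) (hp : p ≤ l.length) {j : ℕ} (hj : p + 2 ≤ j) :
    ePk (l.insertIdx p M) j ↔ ePk l (j - 1) := by
  unfold ePk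
  rw [length_insertIdx_of_le_length hp, getD_insertIdx M p l hp, getD_insertIdx M p l hp,
    getD_insertIdx M p l hp]
  rw [if_neg (by omega : ¬ j + 1 < p), if_neg (by omega : ¬ j + 1 = p),
    if_neg (by omega : ¬ j < p), if_neg (by omega : ¬ j = p),
    if_neg (by omega : ¬ j - 1 < p), if_neg (by omega : ¬ j - 1 = p)]
  rw [show j + 1 - 1 = j - 1 + 1 by omega]
  constructor
  · rintro ⟨h1, h2, h3⟩
    refine ⟨by omega, h2, Or.inr ?_⟩
    rcases h3 with h3 | h3
    · omega
    · exact h3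
  · rintro ⟨h1, h2, h3⟩
    refine ⟨by omega, h2, Or.inr ?_⟩
    rcases h3 with h3 | h3
    · omega
    · exact h3

end Main

end GA5

namespace GA6
open GA GA3 GA4 GA5 List Finset

theorem main_count (M p : ℕ) (l : List ℕ) (hp : p ≤ l.length) (hb : ∀ x ∈ l, x < M) :
    extPeaksList (l.insertIdx p M) + (if 0 < p ∧ ePk l (p-1) then 1 else 0)
      + (if ePk l p then 1 else 0)
    = extPeaksList l + (if p < l.length then 1 else 0) := by
  have hlen := length_insertIdx_of_le_length hp M
  rw [sumE (l.insertIdx p M), sumE l, hlen]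
  set w := l.insertIdx p M with hw
  set n := l.length with hn
  set g : ℕ → ℕ := fun j => if ePk w j then 1 else 0 with hg
  set f : ℕ → ℕ := fun j => if ePk l j then 1 else 0 with hf
  have e1 : ∑ j ∈ range (n+1), g j = (∑ j ∈ Ico 0 p, g j) + ∑ j ∈ Ico p (n+1), g j := by
    rw [range_eq_Ico]
    exact (sum_Ico_consecutive _ (Nat.zero_le p) (by omega)).symm
  have e1' : ∑ j ∈ range n, f j = (∑ j ∈ Ico 0 p, f j) + ∑ j ∈ Ico p n, f j := by
    rw [range_eq_Ico]
    exact (sum_Ico_consecutive _ (Nat.zero_le p) hp).symm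
  have e2 : ∑ j ∈ Ico p (n+1), g j = g p + ∑ j ∈ Ico (p+1) (n+1), g j :=
    sum_eq_sum_Ico_succ_bot (by omega) g
  have e3 : ∑ j ∈ Ico (p+1) (n+1), g j = ∑ j ∈ Ico p n, g (j+1) := by
    rw [sum_Ico_eq_sum_range, sum_Ico_eq_sum_range]
    rw [show n + 1 - (p+1) = n - p by omega]
    exact Finset.sum_congr rfl fun i _ => by rw [show p + 1 + i = p + i + 1 by omega]
  have hA : (∑ j ∈ Ico 0 p, g j) + (if 0 < p ∧ ePk l (p-1) then 1 else 0)
      = ∑ j ∈ Ico 0 p, f j := by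
    cases p with
    | zero => simp
    | succ q =>
      rw [sum_Ico_succ_top (Nat.zero_le q), sum_Ico_succ_top (Nat.zero_le q)]
      have hgq : g q = 0 := by
        have := ePk_w_pm1 M (q+1) l hp hb (by omega)
        rw [show q + 1 - 1 = q by omega] at this
        simp [hg, hw, this]
      have hcong : ∑ j ∈ Ico 0 q, g j = ∑ j ∈ Ico 0 q, f j := by
        refine Finset.sum_congr rfl fun j hj => ?_
        have hj' : j + 1 < q + 1 := by have := (Finset.mem_Ico.1 hj).2; omega
        simp only [hg, hf, hw, ePk_w_lt M (q+1) l hp hj']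
      rw [hgq, hcong]
      have : (if 0 < q + 1 ∧ ePk l (q+1-1) then 1 else 0) = f q := by
        simp only [hf, show q + 1 - 1 = q by omega]
        simp
      omega
  have hB : g p = if p < n then 1 else 0 := by
    simp only [hg, hw, hn, ePk_w_self M p l hp hb]
  have hC : (∑ j ∈ Ico p n, g (j+1)) + (if ePk l p then 1 else 0)
      = ∑ j ∈ Ico p n, f j := by
    rcases Nat.lt_or_ge p n with hpn | hpn
    · rw [sum_eq_sum_Ico_succ_bot hpn (fun j => g (j+1)),
        sum_eq_sum_Ico_succ_bot hpn f]
      have hg1 : g (p+1) = 0 := by simp [hg, hw, ePk_w_p1 M p l hp hb]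
      have hcong : ∑ j ∈ Ico (p+1) n, g (j+1) = ∑ j ∈ Ico (p+1) n, f j := by
        refine Finset.sum_congr rfl fun j hj => ?_
        have hj' : p + 2 ≤ j + 1 := by have := (Finset.mem_Ico.1 hj).1; omega
        simp only [hg, hf, hw, ePk_w_gt M p l hp hj', Nat.add_sub_cancel]
      rw [hg1, hcong]
      have hfp : f p = if ePk l p then 1 else 0 := rfl
      omega
    · have hpn' : p = n := by omega
      rw [hpn', Finset.Ico_self, Finset.sum_empty, Finset.sum_empty,
        if_neg (fun h : ePk l n => by have := h.1; omega)]
      omega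
  have l1 : (Finset.range (n+1)).sum g = ∑ j ∈ Finset.range (n+1), g j := rfl
  have l2 : (Finset.range n).sum f = ∑ j ∈ Finset.range n, f j := rfl
  omega

theorem E_insertIdx (M p : ℕ) (l : List ℕ) (hp : p ≤ l.length) (hb : ∀ x ∈ l, x < M) :
    extPeaksList (l.insertIdx p M) = extPeaksList l + (if Good l p then 0 else 1) := by
  have h := main_count M p l hp hb
  by_cases hA : 0 < p ∧ ePk l (p-1)
  · by_cases hB : ePk l p
    · exact (ePk_asym l p hA.1 hB hA.2).elim
    · have hpn : p < l.length := by have := hA.2.1; omega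
      rw [if_pos (show Good l p from Or.inr (Or.inr hA))]
      rw [if_pos hA, if_neg hB, if_pos hpn] at h
      omega
  · by_cases hB : ePk l p
    · have hpn : p < l.length := by have := hB.1; omega
      rw [if_pos (show Good l p from Or.inr (Or.inl hB))]
      rw [if_neg hA, if_pos hB, if_pos hpn] at h
      omega
    · by_cases hpn : p = l.length
      · rw [if_pos (show Good l p from Or.inl hpn)]
        rw [if_neg hA, if_neg hB, if_neg (by omega : ¬ p < l.length)] at h
        omega
      · have hg : ¬ Good l p := by
          rintro (h1 | h1 | h1)
          · exact hpn h1
          · exact hB h1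
          · exact hA h1
        rw [if_neg hg]
        rw [if_neg hA, if_neg hB, if_pos (by omega : p < l.length)] at h
        omega

end GA6

namespace GA7
open GA GA3 GA4 GA5 GA6 List Finset Polynomial

def insPerm {n : ℕ} (σ : Equiv.Perm (Fin n)) (p : Fin (n+1)) : Equiv.Perm (Fin (n+1)) :=
  (finSuccEquiv' p).trans ((σ.optionCongr).trans (finSuccEquiv' (Fin.last n)).symm)

lemma insPerm_self {n : ℕ} (σ : Equiv.Perm (Fin n)) (p : Fin (n+1)) :
    insPerm σ p p = Fin.last n := by
  simp [insPerm, finSuccEquiv'_at]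

lemma insPerm_succAbove {n : ℕ} (σ : Equiv.Perm (Fin n)) (p : Fin (n+1)) (j : Fin n) :
    insPerm σ p (p.succAbove j) = (σ j).castSucc := by
  simp [insPerm, finSuccEquiv'_succAbove, Fin.succAbove_last]

lemma word_insPerm {n : ℕ} (σ : Equiv.Perm (Fin n)) (p : Fin (n+1)) :
    (List.ofFn fun i => ((insPerm σ p) i : ℕ))
      = (List.ofFn fun j => ((σ j : ℕ))).insertIdx (p : ℕ) n := by
  have hple : (p : ℕ) ≤ (List.ofFn fun j => ((σ j : ℕ))).length := by
    rw [List.length_ofFn]; exact p.is_le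
  apply List.ext_getElem
  · rw [List.length_ofFn, length_insertIdx_of_le_length hple, List.length_ofFn]
  · intro i h1 h2
    rw [List.length_ofFn] at h1
    rw [List.getElem_ofFn]
    rcases lt_trichotomy i (p : ℕ) with hip | hip | hip
    · have hin : i < n := by have := p.is_le; omega
      have hj : (⟨i, h1⟩ : Fin (n+1)) = p.succAbove ⟨i, hin⟩ := by
        rw [Fin.succAbove_of_castSucc_lt]
        · rfl
        · exact hip
      rw [hj, insPerm_succAbove]
      rw [getElem_insertIdx_of_lt (l := List.ofFn fun j => ((σ j : ℕ))) (x := n) hip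
          (by rw [length_insertIdx_of_le_length hple, List.length_ofFn]; omega)]
      rw [List.getElem_ofFn]
      rfl
    · subst hip
      have hfe : (⟨(p:ℕ), h1⟩ : Fin (n+1)) = p := by apply Fin.ext; rfl
      rw [hfe, insPerm_self]
      rw [getElem_insertIdx_self (l := List.ofFn fun j => ((σ j : ℕ))) (x := n) (i := (p:ℕ))
        (by rw [length_insertIdx_of_le_length hple, List.length_ofFn]; omega)]
      rfl
    · have hin : i - 1 < n := by omega
      have hj : (⟨i, h1⟩ : Fin (n+1)) = p.succAbove ⟨i - 1, hin⟩ := by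
        rw [Fin.succAbove_of_le_castSucc]
        · apply Fin.ext
          simp [Fin.val_succ]
          omega
        · rw [Fin.le_castSucc_iff]
          apply Fin.lt_def.2
          simp
          omega
      rw [hj, insPerm_succAbove]
      have hk : (p : ℕ) + (i - 1 - p) = i - 1 := by omega
      have h3 := getElem_insertIdx_add_succ (List.ofFn fun j => ((σ j : ℕ))) n (p:ℕ)
        (i - 1 - (p:ℕ)) (by rw [List.length_ofFn]; omega)
      simp only [hk] at h3
      have h4 : (i : ℕ) - 1 + 1 = i := by omega
      simp only [h4] at h3
      rw [h3, List.getElem_ofFn]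
      rfl

lemma insPerm_bij {n : ℕ} :
    Function.Bijective (fun x : Equiv.Perm (Fin n) × Fin (n+1) => insPerm x.1 x.2) := by
  rw [Fintype.bijective_iff_injective_and_card]
  constructor
  · rintro ⟨σ, p⟩ ⟨σ', p'⟩ h
    simp only at h
    have hp : p = p' := by
      apply (insPerm σ p).injective
      rw [insPerm_self, h, insPerm_self]
    subst hp
    have hσ : σ = σ' := by
      apply Equiv.ext
      intro j
      have h2 : insPerm σ p (p.succAbove j) = insPerm σ' p (p.succAbove j) := by rw [h]
      rw [insPerm_succAbove, insPerm_succAbove] at h2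
      exact Fin.castSucc_injective n h2
    rw [hσ]
  · simp [Fintype.card_perm, Fintype.card_prod, Fintype.card_fin, Nat.factorial_succ,
      mul_comm]

lemma extPeaksList_le_length (l : List ℕ) : extPeaksList l ≤ l.length := by
  match l with
  | [] => simp [extPeaksList]
  | [a] => simp [extPeaksList]
  | a :: b :: t =>
    have h1 := List.countP_le_length
      (p := fun p : ℕ × ℕ × ℕ => decide (p.1 < p.2.1 ∧ p.2.2 < p.2.1))
      (l := ((a :: b :: t).zip ((b :: t).zip t)))
    rw [List.length_zip, List.length_zip] at h1
    rw [extPeaksList]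
    simp only [List.tail_cons]
    have h2 : (if b < a then 1 else 0) ≤ 1 := by split <;> omega
    simp only [List.length_cons] at h1 ⊢
    omega

lemma extPeaks_le {n : ℕ} (σ : Equiv.Perm (Fin n)) : extPeaks σ ≤ n := by
  have := extPeaksList_le_length (List.ofFn fun i => ((σ i : ℕ)))
  rwa [List.length_ofFn] at this

lemma Tpoly_sum (n : ℕ) :
    Tpoly n = ∑ σ : Equiv.Perm (Fin n), (Polynomial.X : Polynomial ℚ) ^ (extPeaks σ) := by
  cases n with
  | zero =>
    have h0 : ∀ σ : Equiv.Perm (Fin 0), extPeaks σ = 0 := by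
      intro σ
      simp [extPeaks, extPeaksList]
    simp only [h0, pow_zero]
    rw [Finset.sum_const, Finset.card_univ, Fintype.card_perm, Fintype.card_fin]
    simp [Tpoly]
  | succ n =>
    rw [show Tpoly (n+1) = ∑ k ∈ Finset.range (n + 2),
      (extPeakCount (n + 1) k : Polynomial ℚ) * Polynomial.X ^ k from rfl]
    rw [← Finset.sum_fiberwise_of_maps_to
      (g := fun σ : Equiv.Perm (Fin (n+1)) => extPeaks σ) (t := Finset.range (n+2))
      (fun σ _ => Finset.mem_range.2 (show extPeaks σ < n+2 by have := extPeaks_le σ; omega))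
      (fun σ => (Polynomial.X : Polynomial ℚ) ^ (extPeaks σ))]
    refine Finset.sum_congr rfl fun k _ => ?_
    have hinner : ∑ σ ∈ Finset.univ.filter (fun σ : Equiv.Perm (Fin (n+1)) => extPeaks σ = k),
        (Polynomial.X : Polynomial ℚ) ^ (extPeaks σ)
        = ∑ _σ ∈ Finset.univ.filter (fun σ : Equiv.Perm (Fin (n+1)) => extPeaks σ = k),
          (Polynomial.X : Polynomial ℚ) ^ k := by
      refine Finset.sum_congr rfl fun σ hσ => ?_
      rw [(Finset.mem_filter.1 hσ).2]
    rw [hinner, Finset.sum_const, nsmul_eq_mul]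
    congr 2
    rw [extPeakCount, Nat.card_eq_fintype_card, Fintype.card_subtype]

end GA7

namespace GA8
open GA GA3 GA4 GA5 GA6 GA7 List Finset Polynomial

lemma extPeaks_insPerm {n : ℕ} (σ : Equiv.Perm (Fin n)) (p : Fin (n+1)) :
    extPeaks (insPerm σ p)
      = extPeaks σ + (if Good (List.ofFn fun i => ((σ i : ℕ))) (p : ℕ) then 0 else 1) := by
  rw [extPeaks, word_insPerm]
  rw [E_insertIdx n (p:ℕ) _ (by rw [List.length_ofFn]; exact p.is_le)
    (by intro x hx
        rw [List.mem_ofFn] at hx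
        obtain ⟨j, rfl⟩ := hx
        exact (σ j).is_lt)]
  rfl

lemma card_good {n : ℕ} (σ : Equiv.Perm (Fin n)) :
    (Finset.univ.filter fun p : Fin (n+1) =>
        Good (List.ofFn fun i => ((σ i : ℕ))) (p : ℕ)).card
      = 2 * extPeaks σ + 1 := by
  rw [Finset.card_filter]
  rw [Fin.sum_univ_eq_sum_range (fun i => if Good (List.ofFn fun i => ((σ i : ℕ))) i then 1 else 0)]
  have := GN (List.ofFn fun i => ((σ i : ℕ)))
  rw [List.length_ofFn] at this
  rw [this]
  rfl

lemma Trec (n : ℕ) :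
    Tpoly (n+1) = (1 + (n : Polynomial ℚ) * Polynomial.X) * Tpoly n
      + 2 * Polynomial.X * (1 - Polynomial.X) * Polynomial.derivative (Tpoly n) := by
  rw [Tpoly_sum (n+1), Tpoly_sum n]
  rw [← Fintype.sum_bijective _ (insPerm_bij (n := n))
    (fun x : Equiv.Perm (Fin n) × Fin (n+1) => (Polynomial.X : Polynomial ℚ) ^ (extPeaks (insPerm x.1 x.2)))
    (fun π => (Polynomial.X : Polynomial ℚ) ^ (extPeaks π)) (fun x => rfl)]
  rw [Fintype.sum_prod_type]
  rw [derivative_sum, Finset.mul_sum, Finset.mul_sum, ← Finset.sum_add_distrib]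
  refine Finset.sum_congr rfl fun σ _ => ?_
  set k := extPeaks σ with hk
  set w := (List.ofFn fun i => ((σ i : ℕ))) with hw
  have hsplit : ∀ p : Fin (n+1), (Polynomial.X : Polynomial ℚ) ^ (extPeaks (insPerm σ p))
      = if Good w (p : ℕ) then (Polynomial.X : Polynomial ℚ)^k else Polynomial.X^(k+1) := by
    intro p
    rw [extPeaks_insPerm σ p, ← hw, ← hk]
    split <;> simp
  simp only [hsplit]
  rw [Finset.sum_ite]
  rw [Finset.sum_const, Finset.sum_const]
  have hcard : (Finset.univ.filter fun p : Fin (n+1) => Good w (p : ℕ)).card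
      = 2 * k + 1 := card_good σ
  have hcard2 : (Finset.univ.filter fun p : Fin (n+1) => ¬ Good w (p : ℕ)).card
      = n - 2 * k := by
    have := Finset.card_filter_add_card_filter_not
      (s := Finset.univ) (p := fun p : Fin (n+1) => Good w (p : ℕ))
    rw [Finset.card_univ, Fintype.card_fin] at this
    have hle : 2 * k + 1 ≤ n + 1 := by
      rw [← hcard]
      exact le_trans (Finset.card_filter_le _ _) (by simp)
    omega
  rw [hcard, hcard2]
  have h2k : 2 * k ≤ n := by
    have hle : 2 * k + 1 ≤ n + 1 := by
      rw [← hcard]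
      exact le_trans (Finset.card_filter_le _ _) (by simp)
    omega
  rw [derivative_X_pow]
  rw [nsmul_eq_mul, nsmul_eq_mul]
  clear_value k
  clear hk hsplit hcard hcard2
  cases k with
  | zero => simp
  | succ m =>
    rw [show m + 1 - 1 = m by omega, Polynomial.C_eq_natCast]
    have hsub : ((n - 2 * (m+1) : ℕ) : Polynomial ℚ)
        = (n : Polynomial ℚ) - 2 * ((m : Polynomial ℚ) + 1) := by
      rw [Nat.cast_sub h2k]
      push_cast
      ring
    rw [hsub]
    push_cast
    ring
end GA8

namespace GA9
open GA8 Finset Polynomial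

noncomputable def aP (j : ℕ) : Polynomial ℚ :=
  (if Even j then (1:ℚ) else -1) • ((1 - Polynomial.X)^(j/2))

lemma aP_zero : aP 0 = 1 := by simp [aP]

lemma deriv_aP (j : ℕ) :
    (1 - Polynomial.X) * derivative (aP j)
      = -(((j/2 : ℕ) : Polynomial ℚ)) * aP j := by
  unfold aP
  rw [derivative_smul]
  set m := j / 2
  set c := (if Even j then (1:ℚ) else -1)
  cases m with
  | zero => simp
  | succ t =>
    rw [derivative_pow]
    rw [smul_eq_C_mul, smul_eq_C_mul]
    have hd : derivative (1 - Polynomial.X : Polynomial ℚ) = -1 := by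
      simp [derivative_sub]
    rw [hd, Polynomial.C_eq_natCast]
    rw [show t + 1 - 1 = t by omega]
    ring

lemma aP_succ (j : ℕ) :
    aP (j+1) = if Even j then -aP j else (Polynomial.X - 1) * aP j := by
  unfold aP
  by_cases h : Even j
  · obtain ⟨t, rfl⟩ := h
    have h1 : ¬ Even (t + t + 1) := by simp [Nat.even_add_one, Nat.even_add]
    have h2 : (t + t + 1) / 2 = (t + t) / 2 := by omega
    simp only [h1, h2, if_true, if_false, if_pos (Even.add_self t)]
    rw [neg_smul]
  · obtain ⟨t, rfl⟩ := Nat.odd_iff.2 (Nat.not_even_iff.1 h)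
    have h1 : Even (2*t + 1 + 1) := ⟨t+1, by omega⟩
    have h2 : (2*t + 1 + 1) / 2 = (2*t+1) / 2 + 1 := by omega
    simp only [h, h1, h2, if_true, if_false]
    rw [one_smul, neg_smul, one_smul, pow_succ]
    ring

noncomputable def Vr (n : ℕ) : Polynomial ℚ :=
  ∑ j ∈ Finset.range (n+1), (n.choose j : Polynomial ℚ) * (aP j * Tpoly (n-j))

lemma Vr_zero : Vr 0 = 1 := by
  simp [Vr, aP_zero]
  rfl

lemma Vr_succ (n : ℕ) :
    Vr (n+1) = (n : Polynomial ℚ) * Polynomial.X * Vr n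
      + 2 * Polynomial.X * (1 - Polynomial.X) * derivative (Vr n) := by
  have hsplit : Vr (n+1)
      = (∑ j ∈ Finset.range (n+1), (n.choose j : Polynomial ℚ) * (aP j * Tpoly (n+1-j)))
        + ∑ j ∈ Finset.range (n+1), (n.choose j : Polynomial ℚ) * (aP (j+1) * Tpoly (n-j)) := by
    unfold Vr
    rw [Finset.sum_range_succ']
    have hps : ∀ j, (((n+1).choose (j+1) : ℕ) : Polynomial ℚ)
        = (n.choose j : Polynomial ℚ) + (n.choose (j+1) : Polynomial ℚ) := by
      intro j
      rw [Nat.choose_succ_succ]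
      push_cast
      ring
    simp only [Nat.succ_sub_succ, hps, add_mul]
    rw [Finset.sum_add_distrib]
    have hT : (∑ j ∈ Finset.range (n+1), (n.choose (j+1) : Polynomial ℚ) * (aP (j+1) * Tpoly (n-j)))
        + ((n+1).choose 0 : Polynomial ℚ) * (aP 0 * Tpoly (n+1-0))
        = ∑ j ∈ Finset.range (n+1), (n.choose j : Polynomial ℚ) * (aP j * Tpoly (n+1-j)) := by
      have e1 := Finset.sum_range_succ'
        (fun j => (n.choose j : Polynomial ℚ) * (aP j * Tpoly (n+1-j))) (n+1)
      have e2 := Finset.sum_range_succ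
        (fun j => (n.choose j : Polynomial ℚ) * (aP j * Tpoly (n+1-j))) (n+1)
      simp only [Nat.succ_sub_succ, Nat.choose_succ_self, Nat.cast_zero, zero_mul,
        add_zero, Nat.choose_zero_right, Nat.cast_one] at e1 e2
      simp only [Nat.choose_zero_right, Nat.cast_one]
      rw [e2] at e1
      rw [← e1]
    rw [← hT]
    ring
  rw [hsplit]
  have hder : derivative (Vr n) = ∑ j ∈ Finset.range (n+1),
      (n.choose j : Polynomial ℚ)
        * (derivative (aP j) * Tpoly (n-j) + aP j * derivative (Tpoly (n-j))) := by
    unfold Vr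
    rw [derivative_sum]
    refine Finset.sum_congr rfl fun j _ => ?_
    rw [derivative_mul, derivative_mul, derivative_natCast]
    ring
  have hVr : Vr n = ∑ j ∈ Finset.range (n+1),
      (n.choose j : Polynomial ℚ) * (aP j * Tpoly (n-j)) := rfl
  rw [hder, hVr, Finset.mul_sum, Finset.mul_sum, ← Finset.sum_add_distrib,
    ← Finset.sum_add_distrib]
  refine Finset.sum_congr rfl fun j hj => ?_
  have hjn : j ≤ n := by have := Finset.mem_range.1 hj; omega
  have hT1 : Tpoly (n+1-j) = (1 + ((n-j : ℕ) : Polynomial ℚ) * Polynomial.X) * Tpoly (n-j)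
      + 2 * Polynomial.X * (1 - Polynomial.X) * derivative (Tpoly (n-j)) := by
    rw [show n + 1 - j = (n - j) + 1 by omega]
    exact Trec (n-j)
  have hnj : ((n - j : ℕ) : Polynomial ℚ) = (n : Polynomial ℚ) - (j : Polynomial ℚ) := by
    rw [Nat.cast_sub hjn]
  have hda := deriv_aP j
  rw [hT1, hnj, aP_succ j]
  by_cases hev : Even j
  · rw [if_pos hev]
    have hj2 : ((j/2 : ℕ) : Polynomial ℚ) * 2 = (j : Polynomial ℚ) := by
      obtain ⟨t, rfl⟩ := hev
      rw [show (t + t) / 2 = t by omega]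
      push_cast
      ring
    linear_combination ((n.choose j : Polynomial ℚ)) *
        ((-2*Polynomial.X*Tpoly (n-j)) * hda
          + (Polynomial.X * aP j * Tpoly (n-j)) * hj2)
  · rw [if_neg hev]
    have hj2 : ((j/2 : ℕ) : Polynomial ℚ) * 2 = (j : Polynomial ℚ) - 1 := by
      obtain ⟨t, rfl⟩ := Nat.odd_iff.2 (Nat.not_even_iff.1 hev)
      rw [show (2*t + 1) / 2 = t by omega]
      push_cast
      ring
    linear_combination ((n.choose j : Polynomial ℚ)) *
        ((-2*Polynomial.X*Tpoly (n-j)) * hda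
          + (Polynomial.X * aP j * Tpoly (n-j)) * hj2)

lemma Vr_eq (n : ℕ) : Vr n = if n = 0 then 1 else 0 := by
  induction n with
  | zero => simpa using Vr_zero
  | succ m ih =>
    rw [if_neg (Nat.succ_ne_zero m), Vr_succ m]
    cases m with
    | zero =>
      rw [Vr_zero]
      simp
    | succ r =>
      rw [if_neg (Nat.succ_ne_zero r)] at ih
      rw [ih]
      simp

end GA9

namespace GA10
open GA9 Finset Polynomial

theorem stmt14' :
    (PowerSeries.mk fun n => ((n.factorial : ℚ)⁻¹) • Tpoly n) *
        (PowerSeries.mk fun j =>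
          ((if Even j then (1 : ℚ) else -1) * (j.factorial : ℚ)⁻¹) •
            ((1 - Polynomial.X : Polynomial ℚ) ^ (j / 2))) = 1 := by
  refine PowerSeries.ext fun n => ?_
  rw [PowerSeries.coeff_mul, PowerSeries.coeff_one]
  simp only [PowerSeries.coeff_mk]
  have key : ∀ x ∈ Finset.HasAntidiagonal.antidiagonal n,
      (((x.1.factorial : ℚ)⁻¹) • Tpoly x.1) *
        (((if Even x.2 then (1 : ℚ) else -1) * (x.2.factorial : ℚ)⁻¹) •
          ((1 - Polynomial.X : Polynomial ℚ) ^ (x.2 / 2)))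
      = Polynomial.C ((n.factorial : ℚ)⁻¹) *
          (Polynomial.C ((n.choose x.1 : ℚ)) * (Tpoly x.1 * aP x.2)) := by
    rintro ⟨p, q⟩ hx
    rw [Finset.HasAntidiagonal.mem_antidiagonal] at hx
    simp only
    set ε : ℚ := (if Even q then (1 : ℚ) else -1) with hε
    have hq : q = n - p := by omega
    have hp : p ≤ n := by omega
    have hcf : ((n.choose p : ℚ)) * (p.factorial : ℚ) * (q.factorial : ℚ)
        = (n.factorial : ℚ) := by
      subst hq
      exact_mod_cast congrArg (Nat.cast (R := ℚ))
        (Nat.choose_mul_factorial_mul_factorial hp)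
    have hsc : (p.factorial : ℚ)⁻¹ * (ε * (q.factorial : ℚ)⁻¹)
        = (n.factorial : ℚ)⁻¹ * ((n.choose p : ℚ) * ε) := by
      have h1 : (p.factorial : ℚ) ≠ 0 := Nat.cast_ne_zero.2 p.factorial_ne_zero
      have h2 : (q.factorial : ℚ) ≠ 0 := Nat.cast_ne_zero.2 q.factorial_ne_zero
      have h3 : (n.factorial : ℚ) ≠ 0 := Nat.cast_ne_zero.2 n.factorial_ne_zero
      field_simp
      linear_combination (-1 : ℚ) * ε * hcf
    rw [smul_eq_C_mul, smul_eq_C_mul]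
    rw [show aP q = Polynomial.C ε * ((1 - Polynomial.X : Polynomial ℚ) ^ (q / 2)) by
      rw [aP, smul_eq_C_mul]]
    have hC : (Polynomial.C ((p.factorial : ℚ)⁻¹) : Polynomial ℚ)
          * Polynomial.C (ε * (q.factorial : ℚ)⁻¹)
        = Polynomial.C ((n.factorial : ℚ)⁻¹)
          * (Polynomial.C ((n.choose p : ℚ)) * Polynomial.C ε) := by
      rw [← Polynomial.C_mul, ← Polynomial.C_mul, ← Polynomial.C_mul, hsc]
    linear_combination (Tpoly p * (1 - Polynomial.X : Polynomial ℚ) ^ (q / 2)) * hC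
  rw [Finset.sum_congr rfl key, ← Finset.mul_sum]
  have hW : (∑ x ∈ Finset.HasAntidiagonal.antidiagonal n,
      Polynomial.C ((n.choose x.1 : ℚ)) * (Tpoly x.1 * aP x.2)) = Vr n := by
    rw [Finset.Nat.sum_antidiagonal_eq_sum_range_succ
      (fun p q => Polynomial.C ((n.choose p : ℚ)) * (Tpoly p * aP q))]
    have hrefl := Finset.sum_range_reflect
      (fun k => Polynomial.C ((n.choose k : ℚ)) * (Tpoly k * aP (n - k))) (n+1)
    simp only [Nat.add_sub_cancel] at hrefl
    rw [← hrefl]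
    unfold Vr
    refine Finset.sum_congr rfl fun j hj => ?_
    have hjn : j ≤ n := by have := Finset.mem_range.1 hj; omega
    rw [show n - (n - j) = j by omega, Nat.choose_symm hjn]
    rw [map_natCast (Polynomial.C (R := ℚ)) (n.choose j)]
    ring
  rw [hW, Vr_eq]
  rcases eq_or_ne n 0 with h | h
  · subst h
    simp
  · simp [h]

end GA10

/-- Gessel's formula, with the denominator cleared:
`(∑_{n≥0} T_n(x) tⁿ/n!) · (∑_m (1-x)^m t^{2m}/(2m)! − ∑_m (1-x)^m t^{2m+1}/(2m+1)!) = 1`. -/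
theorem stmt14 :
    (PowerSeries.mk fun n => ((n.factorial : ℚ)⁻¹) • Tpoly n) *
        (PowerSeries.mk fun j =>
          ((if Even j then (1 : ℚ) else -1) * (j.factorial : ℚ)⁻¹) •
            ((1 - Polynomial.X : Polynomial ℚ) ^ (j / 2))) = 1 := by
  exact GA10.stmt14'
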